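/- arXiv:2401.08243 — 5 statements merged into one kernel-verified Lean document; each statement's English description precedes it below -/
import Mathlib

section
/- Let (T, 𝒜) be a measurable space and ν a finite signed measure on T with total variation measure |ν|. Let d ≥ 1 be an integer, let σ be a probability measure on ℂ^d, and let α ≥ 2 and C > 0 be real numbers such that ∫_{ℂ^d} |log |⟨a, v⟩||^α dσ(a) ≤ C for every v ∈ ℂ^d with ‖v‖ = 1. Let ρ : T → ℂ^d be measurable with ‖ρ(x)‖ = 1 for every x ∈ T, and define G : ℂ^d → ℝ by G(a) = ∫_T log |⟨a, ρ(x)⟩| dν(x). Then G is square-integrable with respect to σ and the variance satisfies Var_σ(G) := ∫_{ℂ^d} G(a)² dσ(a) − (∫_{ℂ^d} G(a) dσ(a))² ≤ C^{2/α} (|ν|(T))². -/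
open MeasureTheory
open scoped InnerProductSpace ENNReal

noncomputable instance (n : ℕ) : MeasurableSpace (EuclideanSpace ℂ (Fin n)) := MeasurableSpace.comap WithLp.ofLp MeasurableSpace.pi
instance (n : ℕ) : BorelSpace (EuclideanSpace ℂ (Fin n)) := PiLp.borelSpace 2

/-- Integral of a real function against a finite signed measure, defined via the
Jordan decomposition `ν = ν⁺ − ν⁻`. -/
noncomputable def sintegral {T : Type*} [MeasurableSpace T] (ν : SignedMeasure T)
    (f : T → ℝ) : ℝ :=
  (∫ x, f x ∂ν.toJordanDecomposition.posPart) - ∫ x, f x ∂ν.toJordanDecomposition.negPart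

set_option maxHeartbeats 1000000 in
/-- Variance estimate for the smooth linear statistic `G(a) = ∫_T log |⟨a, ρ x⟩| dν(x)`:
`G ∈ L²(σ)` and `Var_σ(G) ≤ C^{2/α} (|ν|(T))²`. -/
theorem variance_estimate_linear_statistic
    {T : Type*} [MeasurableSpace T] (ν : SignedMeasure T)
    (d : ℕ) (hd : 1 ≤ d)
    (σ : Measure (EuclideanSpace ℂ (Fin d))) [IsProbabilityMeasure σ]
    (α C : ℝ) (hα : 2 ≤ α) (hC : 0 < C)
    (hmom : ∀ v : EuclideanSpace ℂ (Fin d), ‖v‖ = 1 →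
      ∫⁻ a, ENNReal.ofReal (|Real.log ‖⟪a, v⟫_ℂ‖| ^ α) ∂σ ≤ ENNReal.ofReal C)
    (ρ : T → EuclideanSpace ℂ (Fin d)) (hρ : Measurable ρ)
    (hρ1 : ∀ x, ‖ρ x‖ = 1)
    (G : EuclideanSpace ℂ (Fin d) → ℝ)
    (hG : G = fun a => sintegral ν fun x => Real.log ‖⟪a, ρ x⟫_ℂ‖) :
    MemLp G 2 σ ∧
      (∫ a, (G a) ^ 2 ∂σ) - (∫ a, G a ∂σ) ^ 2 ≤
        C ^ (2 / α) * ((ν.totalVariation Set.univ).toReal) ^ 2 := by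
  have hα0 : (0:ℝ) < α := lt_of_lt_of_le two_pos hα
  set μ : Measure T := ν.totalVariation with hμdef
  set P : Measure T := ν.toJordanDecomposition.posPart with hP
  set N : Measure T := ν.toJordanDecomposition.negPart with hN
  have hPN : μ = P + N := rfl
  haveI : IsFiniteMeasure μ := by rw [hPN]; infer_instance
  set f : EuclideanSpace ℂ (Fin d) → T → ℝ := fun a x => Real.log ‖⟪a, ρ x⟫_ℂ‖ with hf
  -- measurability of f on the product
  have hfm : Measurable (Function.uncurry f) := by
    apply Real.measurable_log.comp
    have : Measurable fun p : (EuclideanSpace ℂ (Fin d)) × T => ⟪p.1, ρ p.2⟫_ℂ :=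
      Measurable.inner (𝕜 := ℂ) measurable_fst (hρ.comp measurable_snd)
    exact this.norm
  set g : EuclideanSpace ℂ (Fin d) → T → ℝ≥0∞ := fun a x => (‖f a x‖₊ : ℝ≥0∞) with hg
  have hgm : Measurable (Function.uncurry g) := hfm.enorm
  have hgm1 : ∀ x, Measurable fun a => g a x := fun x => hgm.of_uncurry_right
  have hgm2 : ∀ a, Measurable (g a) := fun a => hgm.of_uncurry_left
  set M : ℝ≥0∞ := ENNReal.ofReal C ^ (2 / α) with hM
  have hMne : M ≠ ∞ :=
    ENNReal.rpow_ne_top_of_nonneg (by positivity) ENNReal.ofReal_ne_top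
  -- Step C: second moment bound for each fixed x
  have stepC : ∀ x : T, ∫⁻ a, g a x ^ (2:ℝ) ∂σ ≤ M := by
    intro x
    set h : EuclideanSpace ℂ (Fin d) → ℝ := fun a => f a x with hh
    have hhm : Measurable h := hfm.of_uncurry_right
    have hmom' : ∫⁻ a, (‖h a‖₊ : ℝ≥0∞) ^ α ∂σ ≤ ENNReal.ofReal C := by
      refine le_trans (le_of_eq ?_) (hmom (ρ x) (hρ1 x))
      refine lintegral_congr fun a => ?_
      rw [← enorm_eq_nnnorm, Real.enorm_eq_ofReal_abs, ← ENNReal.ofReal_rpow_of_nonneg (abs_nonneg _) hα0.le]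
    have hα' : ENNReal.ofReal α ≠ 0 := by simp [ENNReal.ofReal_eq_zero, not_le, hα0]
    have hαt : (ENNReal.ofReal α).toReal = α := ENNReal.toReal_ofReal hα0.le
    have h1 : eLpNorm h (ENNReal.ofReal α) σ ≤ ENNReal.ofReal C ^ (1 / α) := by
      rw [eLpNorm_eq_lintegral_rpow_enorm_toReal hα' ENNReal.ofReal_ne_top, hαt]
      exact ENNReal.rpow_le_rpow hmom' (by positivity)
    have h2 : eLpNorm h 2 σ ≤ ENNReal.ofReal C ^ (1 / α) := by
      refine le_trans (eLpNorm_le_eLpNorm_of_exponent_le ?_ hhm.aestronglyMeasurable) h1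
      rw [show (2:ℝ≥0∞) = ENNReal.ofReal 2 by simp]
      exact ENNReal.ofReal_le_ofReal hα
    have h3 : eLpNorm h 2 σ = (∫⁻ a, (‖h a‖₊ : ℝ≥0∞) ^ (2:ℝ) ∂σ) ^ (1/(2:ℝ)) := by
      rw [eLpNorm_eq_lintegral_rpow_enorm_toReal (by norm_num) (by norm_num)]
      norm_num
      rfl
    calc ∫⁻ a, g a x ^ (2:ℝ) ∂σ
        = ((∫⁻ a, (‖h a‖₊ : ℝ≥0∞) ^ (2:ℝ) ∂σ) ^ (1/(2:ℝ))) ^ (2:ℝ) := by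
          rw [← ENNReal.rpow_mul]; norm_num; rfl
      _ = (eLpNorm h 2 σ) ^ (2:ℝ) := by rw [h3]
      _ ≤ (ENNReal.ofReal C ^ (1 / α)) ^ (2:ℝ) := ENNReal.rpow_le_rpow h2 (by norm_num)
      _ = M := by rw [← ENNReal.rpow_mul, hM]; congr 1; ring
  -- Step B': for fixed x y, cross moment bound
  have stepB' : ∀ x y : T, ∫⁻ a, g a x * g a y ∂σ ≤ M := by
    intro x y
    have hconj : Real.HolderConjugate 2 2 := Real.HolderConjugate.two_two
    have := ENNReal.lintegral_mul_le_Lp_mul_Lq σ hconj (hgm1 x).aemeasurable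
      (hgm1 y).aemeasurable
    refine le_trans this ?_
    have hMh : ∀ z : T, (∫⁻ a, g a z ^ (2:ℝ) ∂σ) ^ (1/(2:ℝ)) ≤ M ^ (1/(2:ℝ)) :=
      fun z => ENNReal.rpow_le_rpow (stepC z) (by norm_num)
    calc (∫⁻ a, g a x ^ (2:ℝ) ∂σ) ^ (1/(2:ℝ)) * (∫⁻ a, g a y ^ (2:ℝ) ∂σ) ^ (1/(2:ℝ))
        ≤ M ^ (1/(2:ℝ)) * M ^ (1/(2:ℝ)) := mul_le_mul' (hMh x) (hMh y)
      _ = M := by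
          rw [← ENNReal.rpow_add _ _ (by simp [hM, ENNReal.rpow_eq_zero_iff, hC,
            ENNReal.ofReal_eq_zero, not_le]) hMne]
          norm_num
  -- Step B: main second moment bound
  have stepB : ∫⁻ a, (∫⁻ x, g a x ∂μ) ^ (2:ℝ) ∂σ ≤ M * (μ Set.univ * μ Set.univ) := by
    have e1 : ∀ a, (∫⁻ x, g a x ∂μ) ^ (2:ℝ) = ∫⁻ x, ∫⁻ y, g a x * g a y ∂μ ∂μ := by
      intro a
      rw [lintegral_lintegral_mul (hgm2 a).aemeasurable (hgm2 a).aemeasurable]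
      rw [show ((2:ℝ)) = ((2:ℕ):ℝ) by norm_num, ENNReal.rpow_natCast, sq]
    calc ∫⁻ a, (∫⁻ x, g a x ∂μ) ^ (2:ℝ) ∂σ
        = ∫⁻ a, ∫⁻ x, ∫⁻ y, g a x * g a y ∂μ ∂μ ∂σ := lintegral_congr e1
      _ = ∫⁻ x, ∫⁻ a, ∫⁻ y, g a x * g a y ∂μ ∂σ ∂μ := by
          apply lintegral_lintegral_swap
          apply Measurable.aemeasurable
          have heq : (Function.uncurry fun a x => ∫⁻ y, g a x * g a y ∂μ)
              = fun p : (EuclideanSpace ℂ (Fin d)) × T => g p.1 p.2 * ∫⁻ y, g p.1 y ∂μ := by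
            funext p
            exact lintegral_const_mul'' _ ((hgm2 p.1).aemeasurable)
          rw [heq]
          exact hgm.mul (hgm.lintegral_prod_right'.comp measurable_fst)
      _ = ∫⁻ x, ∫⁻ y, ∫⁻ a, g a x * g a y ∂σ ∂μ ∂μ := by
          refine lintegral_congr fun x => ?_
          apply lintegral_lintegral_swap
          apply Measurable.aemeasurable
          exact ((hgm.comp (measurable_fst.prodMk measurable_const)).mul hgm)
      _ ≤ ∫⁻ _, ∫⁻ _, M ∂μ ∂μ :=
          lintegral_mono fun x => lintegral_mono fun y => stepB' x y
      _ = M * (μ Set.univ * μ Set.univ) := by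
          rw [lintegral_const, lintegral_const, mul_assoc]
  -- Step A: pointwise bound on G
  have stepA : ∀ a, (‖G a‖₊ : ℝ≥0∞) ≤ ∫⁻ x, g a x ∂μ := by
    intro a
    rw [hG]
    simp only [sintegral]
    calc (‖(∫ x, f a x ∂P) - ∫ x, f a x ∂N‖₊ : ℝ≥0∞)
        ≤ (‖∫ x, f a x ∂P‖₊ : ℝ≥0∞) + ‖∫ x, f a x ∂N‖₊ := by
          exact_mod_cast nnnorm_sub_le _ _
      _ ≤ (∫⁻ x, g a x ∂P) + ∫⁻ x, g a x ∂N :=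
          add_le_add (enorm_integral_le_lintegral_enorm _)
            (enorm_integral_le_lintegral_enorm _)
      _ = ∫⁻ x, g a x ∂μ := by rw [hPN, lintegral_add_measure]
  -- consequences
  have hGbound : ∫⁻ a, (‖G a‖₊ : ℝ≥0∞) ^ (2:ℝ) ∂σ ≤ M * (μ Set.univ * μ Set.univ) := by
    refine le_trans (lintegral_mono fun a => ?_) stepB
    exact ENNReal.rpow_le_rpow (stepA a) (by norm_num)
  have hGm : StronglyMeasurable G := by
    rw [hG]
    simp only [sintegral]
    exact (hfm.stronglyMeasurable.integral_prod_right').sub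
      (hfm.stronglyMeasurable.integral_prod_right')
  have hfin : M * (μ Set.univ * μ Set.univ) ≠ ∞ := by
    refine ENNReal.mul_ne_top hMne (ENNReal.mul_ne_top ?_ ?_) <;>
      exact (measure_ne_top μ _)
  have hmem : MemLp G 2 σ := by
    refine ⟨hGm.aestronglyMeasurable, ?_⟩
    rw [eLpNorm_eq_lintegral_rpow_enorm_toReal (by norm_num) (by norm_num),
      show ((2:ℝ≥0∞)).toReal = (2:ℝ) by norm_num]
    exact ENNReal.rpow_lt_top_of_nonneg (by norm_num)
      (lt_of_le_of_lt hGbound hfin.lt_top).ne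
  refine ⟨hmem, ?_⟩
  have hint : ∫ a, (G a) ^ 2 ∂σ = (∫⁻ a, (‖G a‖₊ : ℝ≥0∞) ^ (2:ℝ) ∂σ).toReal := by
    rw [integral_eq_lintegral_of_nonneg_ae (ae_of_all _ fun a => sq_nonneg _)
      ((hGm.pow 2).aestronglyMeasurable)]
    congr 1
    refine lintegral_congr fun a => ?_
    rw [ENNReal.rpow_two, ← enorm_eq_nnnorm, Real.enorm_eq_ofReal_abs,
      ← ENNReal.ofReal_pow (abs_nonneg _), sq_abs]
  have final : (∫⁻ a, (‖G a‖₊ : ℝ≥0∞) ^ (2:ℝ) ∂σ).toReal ≤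
      C ^ (2 / α) * ((μ Set.univ).toReal) ^ 2 := by
    refine le_trans (ENNReal.toReal_mono hfin hGbound) ?_
    rw [ENNReal.toReal_mul, ENNReal.toReal_mul, hM, ← ENNReal.toReal_rpow,
      ENNReal.toReal_ofReal hC.le, sq]
  calc (∫ a, (G a) ^ 2 ∂σ) - (∫ a, G a ∂σ) ^ 2 ≤ ∫ a, (G a) ^ 2 ∂σ :=
        sub_le_self _ (sq_nonneg _)
    _ ≤ C ^ (2 / α) * ((μ Set.univ).toReal) ^ 2 := by rw [hint]; exact final
end

section
/- Let n ≥ 1 be an integer and let σ_n be the standard Gaussian measure on ℂⁿ, i.e. the measure with density a ↦ π^{−n} exp(−‖a‖²) with respect to Lebesgue measure on ℂⁿ. Then for every real α ≥ 1 and every v ∈ ℂⁿ with ‖v‖ = 1, one has ∫_{ℂⁿ} |log |⟨a, v⟩||^α dσ_n(a) = 2 ∫₀^∞ r |log r|^α e^{−r²} dr; in particular the value of this integral is independent of n and of v. -/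
open MeasureTheory
open scoped InnerProductSpace ENNReal Real
open scoped NNReal

noncomputable instance (n : ℕ) : MeasureSpace (EuclideanSpace ℂ (Fin n)) :=
  ⟨(Measure.pi fun _ => volume).map (WithLp.toLp 2)⟩

/-- The standard Gaussian measure on `ℂⁿ`, with density `π^{-n} exp(-‖a‖²)` with respect
to Lebesgue measure. -/
noncomputable def gaussianCn (n : ℕ) : Measure (EuclideanSpace ℂ (Fin n)) :=
  volume.withDensity fun a => ENNReal.ofReal ((π ^ n)⁻¹ * Real.exp (-‖a‖ ^ 2))

lemma polar_aux (F : ℝ → ℝ) :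
    ∫ z : ℂ, F ‖z‖ = (2 * π) * ∫ r in Set.Ioi (0 : ℝ), r * F r := by
  rw [← Complex.integral_comp_polarCoord_symm (fun z => F ‖z‖)]
  have htar : polarCoord.target = Set.Ioi (0 : ℝ) ×ˢ Set.Ioo (-π) π := rfl
  have h1 : ∫ p in polarCoord.target, p.1 • F ‖Complex.polarCoord.symm p‖ =
      ∫ p in polarCoord.target, (p.1 * F p.1) * (1 : ℝ) := by
    refine setIntegral_congr_fun (by rw [htar]; exact measurableSet_Ioi.prod measurableSet_Ioo) ?_
    rintro ⟨r, θ⟩ hp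
    rw [htar] at hp
    have hr : 0 < r := hp.1
    simp only [smul_eq_mul, mul_one]
    rw [Complex.norm_polarCoord_symm, abs_of_pos hr]
  rw [h1, htar, Measure.volume_eq_prod, ← Measure.prod_restrict,
    integral_prod_mul (fun r => r * F r) (fun _ => (1 : ℝ))]
  rw [integral_const, measureReal_restrict_apply_univ, Real.volume_real_Ioo, smul_eq_mul, mul_one]
  rw [max_eq_left (by rw [sub_neg_eq_add]; positivity)]
  ring

lemma halfGauss : ∫ r in Set.Ioi (0 : ℝ), r * Real.exp (-r ^ 2) = 1 / 2 := by
  have hderiv : ∀ x ∈ Set.Ioi (0 : ℝ),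
      HasDerivAt (fun r : ℝ => -(1 / 2) * Real.exp (-r ^ 2)) (x * Real.exp (-x ^ 2)) x := by
    intro x _
    have h1 : HasDerivAt (fun r : ℝ => -r ^ 2) (-(2 * x)) x := by
      simpa using ((hasDerivAt_pow 2 x).fun_neg)
    have h2 := (Real.hasDerivAt_exp (-x ^ 2)).comp x h1
    have h3 := h2.const_mul (-(1 / 2) : ℝ)
    exact h3.congr_deriv (by ring)
  have hlim : Filter.Tendsto (fun r : ℝ => -(1 / 2) * Real.exp (-r ^ 2))
      Filter.atTop (nhds 0) := by
    have h0 : Filter.Tendsto (fun r : ℝ => -r ^ 2) Filter.atTop Filter.atBot :=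
      Filter.tendsto_neg_atTop_atBot.comp (Filter.tendsto_pow_atTop two_ne_zero)
    have := (Real.tendsto_exp_atBot.comp h0).const_mul (-(1 / 2) : ℝ)
    simpa using this
  have h := integral_Ioi_of_hasDerivAt_of_nonneg ?hcont hderiv ?hpos hlim
  · rw [h]; norm_num [Real.exp_zero]
  case hcont =>
    exact (by fun_prop : Continuous fun r : ℝ => -(1 / 2) * Real.exp (-r ^ 2)).continuousWithinAt
  case hpos =>
    intro x hx
    have : (0:ℝ) < x := hx
    positivity

lemma gauss1 : ∫ z : ℂ, π⁻¹ * Real.exp (-‖z‖ ^ 2) = 1 := by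
  rw [polar_aux (fun r => π⁻¹ * Real.exp (-r ^ 2))]
  have : ∀ r : ℝ, r * (π⁻¹ * Real.exp (-r ^ 2)) = π⁻¹ * (r * Real.exp (-r ^ 2)) := by
    intro r; ring
  simp_rw [this]
  rw [integral_const_mul, halfGauss]
  have hπ : (π : ℝ) ≠ 0 := Real.pi_ne_zero
  field_simp

lemma gaussM (α : ℝ) : ∫ z : ℂ, π⁻¹ * Real.exp (-‖z‖ ^ 2) * |Real.log ‖z‖| ^ α =
    2 * ∫ r in Set.Ioi (0 : ℝ), r * |Real.log r| ^ α * Real.exp (-r ^ 2) := by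
  rw [polar_aux (fun r => π⁻¹ * Real.exp (-r ^ 2) * |Real.log r| ^ α)]
  have : ∀ r : ℝ, r * (π⁻¹ * Real.exp (-r ^ 2) * |Real.log r| ^ α) =
      π⁻¹ * (r * |Real.log r| ^ α * Real.exp (-r ^ 2)) := by intro r; ring
  simp_rw [this]
  rw [integral_const_mul]
  have hπ : (π : ℝ) ≠ 0 := Real.pi_ne_zero
  field_simp

lemma uncurry_mp (n : ℕ) :
    MeasurePreserving (fun (u : Fin n → Fin 2 → ℝ) (p : Fin n × Fin 2) => u p.1 p.2)
      volume volume := by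
  constructor
  · exact measurable_pi_lambda _ fun p =>
      (measurable_pi_apply p.2).comp (measurable_pi_apply p.1)
  · refine (Measure.pi_eq fun s hs => ?_).symm
    rw [Measure.map_apply (measurable_pi_lambda _ fun p =>
      (measurable_pi_apply p.2).comp (measurable_pi_apply p.1))
      (MeasurableSet.univ_pi hs)]
    have hpre : (fun (u : Fin n → Fin 2 → ℝ) (p : Fin n × Fin 2) => u p.1 p.2) ⁻¹'
        (Set.univ.pi s) = Set.univ.pi (fun i => Set.univ.pi fun j => s (i, j)) := by
      ext u
      simp [Set.mem_pi, Prod.forall]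
    rw [hpre]
    rw [show (volume : Measure (Fin n → Fin 2 → ℝ)) = Measure.pi (fun _ => volume) from rfl,
      Measure.pi_pi]
    simp_rw [show (volume : Measure (Fin 2 → ℝ)) = Measure.pi (fun _ => volume) from rfl,
      Measure.pi_pi]
    rw [Fintype.prod_prod_type]

lemma isometry_mp (n : ℕ) (W : EuclideanSpace ℂ (Fin n) ≃ₗᵢ[ℝ] EuclideanSpace ℂ (Fin n)) :
    MeasurePreserving W volume volume := by
  set b := (Pi.orthonormalBasis fun _ : Fin n => Complex.orthonormalBasisOneI).reindex
    (Equiv.sigmaEquivProd (Fin n) (Fin 2)) with hb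
  have T0 : MeasurePreserving (WithLp.ofLp : EuclideanSpace ℂ (Fin n) → (Fin n → ℂ))
      volume (Measure.pi fun _ => volume) :=
    ⟨WithLp.measurable_ofLp 2 _, by
      show Measure.map _ (Measure.map (WithLp.toLp 2) _) = _
      rw [Measure.map_map (WithLp.measurable_ofLp 2 _) (WithLp.measurable_toLp 2 _)]
      exact Measure.map_id⟩
  have T1 : MeasurePreserving
      (fun (a : EuclideanSpace ℂ (Fin n)) i => Complex.measurableEquivPi (a i))
      volume (Measure.pi fun _ : Fin n => (volume : Measure (Fin 2 → ℝ))) :=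
    (measurePreserving_pi _ _ (fun _ => Complex.volume_preserving_equiv_pi)).comp T0
  have T2 := uncurry_mp n
  have T3 := PiLp.volume_preserving_toLp (Fin n × Fin 2)
  have T4 := b.measurePreserving_repr_symm
  have TT := ((T4.comp T3).comp T2).comp T1
  have hid : (((⇑b.repr.symm ∘ (@WithLp.toLp 2 (Fin n × Fin 2 → ℝ))) ∘
      (fun (u : Fin n → Fin 2 → ℝ) (p : Fin n × Fin 2) => u p.1 p.2)) ∘
      (fun (a : EuclideanSpace ℂ (Fin n)) i => Complex.measurableEquivPi (a i))) = id := by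
    funext a
    simp only [Function.comp_apply, id_eq]
    rw [← b.repr.injective.eq_iff, b.repr.apply_symm_apply]
    ext p
    obtain ⟨i, j⟩ := p
    rfl
  rw [hid] at TT
  have hvol := TT.map_eq.symm.trans (Measure.map_id)
  rw [← hvol]
  exact W.measurePreserving

/-- The Gaussian logarithmic moment identity:
`∫_{ℂⁿ} |log|⟨a,v⟩||^α dσ_n(a) = 2∫₀^∞ r |log r|^α e^{-r²} dr` for every unit vector `v`. -/
theorem gaussian_log_moment (n : ℕ) (hn : 1 ≤ n) (α : ℝ) (hα : 1 ≤ α)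
    (v : EuclideanSpace ℂ (Fin n)) (hv : ‖v‖ = 1) :
    ∫ a, |Real.log ‖⟪a, v⟫_ℂ‖| ^ α ∂(gaussianCn n) =
      2 * ∫ r in Set.Ioi (0 : ℝ), r * |Real.log r| ^ α * Real.exp (-r ^ 2) := by
  classical
  set i0 : Fin n := ⟨0, hn⟩ with hi0
  -- orthonormal basis containing v
  have hv' : Orthonormal ℂ (({i0} : Set (Fin n)).restrict (fun _ : Fin n => v)) := by
    constructor
    · intro i; exact hv
    · intro i j hij
      exact absurd (Subtype.ext ((Set.mem_singleton_iff.1 i.2).trans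
        (Set.mem_singleton_iff.1 j.2).symm)) hij
  obtain ⟨c, hc⟩ := hv'.exists_orthonormalBasis_extension_of_card_eq
    (by simp [finrank_euclideanSpace])
  have hci0 : c i0 = v := hc i0 (Set.mem_singleton _)
  -- the unitary map
  set U : EuclideanSpace ℂ (Fin n) ≃ₗᵢ[ℂ] EuclideanSpace ℂ (Fin n) := c.repr with hU
  set Wr : EuclideanSpace ℂ (Fin n) ≃ₗᵢ[ℝ] EuclideanSpace ℂ (Fin n) :=
    { toLinearEquiv := U.symm.toLinearEquiv.restrictScalars ℝ,
      norm_map' := fun x => U.symm.norm_map x } with hWr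
  have hmp : MeasurePreserving Wr volume volume := isometry_mp n Wr
  have hemb : MeasurableEmbedding (⇑Wr) := by
    have := Wr.toMeasurableEquiv.measurableEmbedding
    simpa using this
  -- Step 1: unfold density
  set D : EuclideanSpace ℂ (Fin n) → ℝ := fun a => (π ^ n)⁻¹ * Real.exp (-‖a‖ ^ 2) with hD
  have hDpos : ∀ a, 0 ≤ D a := fun a => by rw [hD]; positivity
  have hDmeas : Measurable (fun a => (D a).toNNReal) := by
    apply Measurable.real_toNNReal
    apply Continuous.measurable
    fun_prop
  have h1 : ∫ a, |Real.log ‖⟪a, v⟫_ℂ‖| ^ α ∂(gaussianCn n) =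
      ∫ a, D a * |Real.log ‖⟪a, v⟫_ℂ‖| ^ α := by
    rw [gaussianCn]
    rw [show (fun a : EuclideanSpace ℂ (Fin n) => ENNReal.ofReal ((π ^ n)⁻¹ *
        Real.exp (-‖a‖ ^ 2))) = (fun a => (((D a).toNNReal : ℝ≥0) : ℝ≥0∞)) from rfl]
    rw [integral_withDensity_eq_integral_smul hDmeas]
    refine integral_congr_ae (Filter.Eventually.of_forall fun a => ?_)
    simp [NNReal.smul_def, Real.coe_toNNReal _ (hDpos a)]
  -- Step 2: substitution
  have h2 : ∫ a, D a * |Real.log ‖⟪a, v⟫_ℂ‖| ^ α =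
      ∫ x, D x * |Real.log ‖x i0‖| ^ α := by
    rw [← hmp.integral_comp hemb (fun a => D a * |Real.log ‖⟪a, v⟫_ℂ‖| ^ α)]
    refine integral_congr_ae (Filter.Eventually.of_forall fun x => ?_)
    have hWx : ∀ x, (Wr x : EuclideanSpace ℂ (Fin n)) = U.symm x := fun _ => rfl
    have hnorm : ‖(Wr x : EuclideanSpace ℂ (Fin n))‖ = ‖x‖ := by
      rw [hWx]; exact U.symm.norm_map x
    have hinner : ‖⟪(Wr x : EuclideanSpace ℂ (Fin n)), v⟫_ℂ‖ = ‖x i0‖ := by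
      rw [hWx, ← hci0, ← norm_inner_symm, ← OrthonormalBasis.repr_apply_apply]
      have hxx : c.repr (U.symm x) = x := U.apply_symm_apply x
      rw [hxx]
    rw [hD]
    simp only [hnorm, hinner]
  -- Step 3: product structure
  set h : Fin n → ℂ → ℝ := fun i z =>
    π⁻¹ * Real.exp (-‖z‖ ^ 2) * (if i = i0 then |Real.log ‖z‖| ^ α else 1) with hh
  have h3 : ∀ x : EuclideanSpace ℂ (Fin n),
      D x * |Real.log ‖x i0‖| ^ α = ∏ i : Fin n, h i (x i) := by
    intro x
    rw [hh, hD]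
    simp only []
    rw [Finset.prod_mul_distrib, Finset.prod_mul_distrib, Finset.prod_const,
      Finset.prod_ite_eq' Finset.univ i0 (fun i => |Real.log ‖x i‖| ^ α)]
    have hn2 : ‖x‖ ^ 2 = ∑ i, ‖x i‖ ^ 2 := by
      rw [EuclideanSpace.norm_eq, Real.sq_sqrt (Finset.sum_nonneg fun i _ => sq_nonneg _)]
    rw [← Real.exp_sum]
    simp only [Finset.mem_univ, if_true, Finset.card_univ, Fintype.card_fin]
    rw [Finset.sum_neg_distrib, ← hn2, inv_pow]
  have h4 : ∫ x : EuclideanSpace ℂ (Fin n), ∏ i, h i (x i) = ∏ i, ∫ z : ℂ, h i z :=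
    by
      exact (integral_map_equiv (MeasurableEquiv.toLp 2 (Fin n → ℂ)) _).trans
        (MeasureTheory.integral_fintype_prod_eq_prod h)
  have h5 : ∏ i, ∫ z : ℂ, h i z = 2 * ∫ r in Set.Ioi (0 : ℝ),
      r * |Real.log r| ^ α * Real.exp (-r ^ 2) := by
    rw [Finset.prod_eq_single i0]
    · rw [hh]
      simp only [if_pos rfl]
      exact gaussM α
    · intro i _ hne
      rw [hh]
      simp only [if_neg hne, mul_one]
      exact gauss1
    · intro habs
      exact absurd (Finset.mem_univ i0) habs
  rw [h1, h2]
  rw [show (∫ x, D x * |Real.log ‖x i0‖| ^ α) = ∫ x : EuclideanSpace ℂ (Fin n), ∏ i, h i (x i)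
    from integral_congr_ae (Filter.Eventually.of_forall fun x => h3 x)]
  rw [h4, h5]
end

section
/- Let 𝒜_n denote the surface-area measure on the unit sphere S^{2n−1} = {a ∈ ℂⁿ : ‖a‖ = 1}, whose total mass is 𝒜_n(S^{2n−1}) = 2πⁿ/(n−1)!, and let σ_n = 𝒜_n / 𝒜_n(S^{2n−1}) be the normalized area measure. Then for every real α ≥ 1 there exists a constant C_α > 0 such that for every integer n ≥ 2 and every v ∈ ℂⁿ with ‖v‖ = 1, ∫_{S^{2n−1}} |log |⟨a, v⟩||^α dσ_n(a) ≤ C_α (log n)^α. -/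
open MeasureTheory
open scoped InnerProductSpace ENNReal Real

open Set
open scoped NNReal

local notation "E" n => EuclideanSpace ℂ (Fin n)
lemma vol_eq_pi (n : ℕ) : (volume : Measure (E n)) =
    (volume : Measure (Fin n → ℂ)).map (MeasurableEquiv.toLp 2 (Fin n → ℂ)) := rfl

lemma vol_apply (n : ℕ) (S : Set (E n)) :
    (volume : Measure (E n)) S = (volume : Measure (Fin n → ℂ)) (WithLp.toLp 2 ⁻¹' S) := by
  rw [vol_eq_pi, MeasurableEquiv.map_apply]; rfl

instance (n : ℕ) : Measure.IsAddHaarMeasure (volume : Measure (E n)) :=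
  (PiLp.continuousLinearEquiv 2 ℂ (fun _ : Fin n => ℂ)).symm.isAddHaarMeasure_map
    (volume : Measure (Fin n → ℂ))

lemma ball_eq_sum (n : ℕ) :
    Metric.ball (0 : E n) 1 = {x : E n | ∑ i, ‖x i‖ ^ (2:ℝ) < 1} := by
  ext x
  rw [mem_ball_zero_iff, EuclideanSpace.norm_eq]
  rw [show (Real.sqrt (∑ i, ‖x i‖ ^ 2) < 1) ↔ (∑ i, ‖x i‖ ^ 2 < 1 ^ 2) from Real.sqrt_lt' one_pos]
  simp [Real.rpow_two]

lemma volume_ball_complex (n : ℕ) :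
    (volume : Measure (E n)) (Metric.ball 0 1) = ENNReal.ofReal (π ^ n / n.factorial) := by
  rw [ball_eq_sum]
  have : (volume : Measure (E n)) {x : E n | ∑ i, ‖x i‖ ^ (2:ℝ) < 1}
      = (volume : Measure (Fin n → ℂ)) {x : Fin n → ℂ | ∑ i, ‖x i‖ ^ (2:ℝ) < 1} := vol_apply n _
  rw [this, Complex.volume_sum_rpow_lt_one (Fin n) one_le_two]
  norm_num [Real.Gamma_two, Real.Gamma_nat_eq_factorial]

lemma finrank_real_E (n : ℕ) : Module.finrank ℝ (E n) = 2 * n := by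
  rw [← Module.finrank_mul_finrank ℝ ℂ (E n), Complex.finrank_real_complex, finrank_euclideanSpace,
    Fintype.card_fin]

lemma volume_eq_canonical (n : ℕ) (hn : 0 < n) :
    (volume : Measure (E n)) = @volume (E n) measureSpaceOfInnerProductSpace := by
  have hnt : Nontrivial (E n) := by
    have h1 : 0 < Module.finrank ℂ (E n) := by simpa [finrank_euclideanSpace] using hn
    exact Module.nontrivial_of_finrank_pos h1
  set ν : Measure (E n) := @volume (E n) measureSpaceOfInnerProductSpace with hν
  have hb : ν = (stdOrthonormalBasis ℝ (E n)).toBasis.addHaar := rfl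
  have hHaar : Measure.IsAddHaarMeasure ν := by
    rw [hb]; infer_instance
  have key := Measure.isAddLeftInvariant_eq_smul (volume : Measure (E n)) ν
  -- compute ν (ball 0 1)
  have hνball : ν (Metric.ball 0 1) = ENNReal.ofReal (π ^ n / n.factorial) := by
    have := @InnerProductSpace.volume_ball (E n) _ _ _ _ _ hnt (0 : E n) 1
    rw [← hν] at this
    rw [this, finrank_real_E,
      show ((2 * n : ℕ) : ℝ) / 2 + 1 = ((n : ℕ) : ℝ) + 1 by push_cast; ring,
      Real.Gamma_nat_eq_factorial]
    simp [pow_mul, Real.sq_sqrt Real.pi_pos.le]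
  have hball := volume_ball_complex n
  set k := ENNReal.ofReal (π ^ n / n.factorial) with hk
  have hk0 : k ≠ 0 := by
    rw [hk]
    simp only [ne_eq, ENNReal.ofReal_eq_zero, not_le]
    positivity
  have hktop : k ≠ ∞ := ENNReal.ofReal_ne_top
  have hc : ((volume : Measure (E n)).addHaarScalarFactor ν : ℝ≥0∞) = 1 := by
    have h1 : k = ((volume : Measure (E n)).addHaarScalarFactor ν : ℝ≥0∞) * k := by
      conv_lhs => rw [← hball, key]
      simp only [Measure.smul_apply, hνball, ENNReal.smul_def, smul_eq_mul]
    have h2 := congrArg (· * k⁻¹) h1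
    simp only [mul_assoc, ENNReal.mul_inv_cancel hk0 hktop, mul_one] at h2
    exact h2.symm
  have hc' : (volume : Measure (E n)).addHaarScalarFactor ν = 1 := by exact_mod_cast hc
  rw [key, hc', one_smul]

lemma exists_onb (m : ℕ) (v : E (m+1)) (hv : ‖v‖ = 1) :
    ∃ b : OrthonormalBasis (Fin (m+1)) ℂ (E (m+1)), b 0 = v := by
  have hcard : Module.finrank ℂ (E (m+1)) = Fintype.card (Fin (m+1)) := by
    simp [finrank_euclideanSpace]
  have horth : Orthonormal ℂ (({0} : Set (Fin (m+1))).restrict (fun _ => v)) := by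
    constructor
    · intro i; exact hv
    · intro i j hij
      exfalso
      apply hij
      have hi := i.2; have hj := j.2
      simp only [Set.mem_singleton_iff] at hi hj
      exact Subtype.ext (hi.trans hj.symm)
  obtain ⟨b, hb⟩ := Orthonormal.exists_orthonormalBasis_extension_of_card_eq hcard horth
  exact ⟨b, hb 0 rfl⟩

noncomputable def realIso (b : OrthonormalBasis (Fin n) ℂ (E n)) : (E n) ≃ₗᵢ[ℝ] (E n) where
  toLinearEquiv := b.repr.toLinearEquiv.restrictScalars ℝ
  norm_map' := b.repr.norm_map

@[simp] lemma realIso_apply (b : OrthonormalBasis (Fin n) ℂ (E n)) (x : E n) :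
    realIso b x = b.repr x := rfl

lemma nontrivial_E (n : ℕ) (hn : 0 < n) : Nontrivial (E n) :=
  Module.nontrivial_of_finrank_pos (R := ℂ) (by simpa [finrank_euclideanSpace] using hn)

lemma volume_closedBall_complex (n : ℕ) (hn : 0 < n) :
    (volume : Measure (E n)) (Metric.closedBall 0 1) = ENNReal.ofReal (π ^ n / n.factorial) := by
  have := nontrivial_E n hn
  rw [Measure.addHaar_closedBall_eq_addHaar_ball, volume_ball_complex]

lemma closedBall_eq_sum (n : ℕ) :
    Metric.closedBall (0 : E n) 1 = {x : E n | ∑ i, ‖x i‖ ^ (2:ℝ) ≤ 1} := by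
  ext x
  rw [Metric.mem_closedBall, dist_zero_right, EuclideanSpace.norm_eq,
    ← Real.sqrt_one, Real.sqrt_le_sqrt_iff zero_le_one]
  simp [Real.rpow_two]

lemma cap_volume (m : ℕ) (hm : 0 < m) (v : E (m+1)) (hv : ‖v‖ = 1) (δ : ℝ) (hδ : 0 ≤ δ) :
    (volume : Measure (E (m+1))) {x : E (m+1) | ‖x‖ ≤ 1 ∧ ‖⟪x, v⟫_ℂ‖ ≤ δ}
      ≤ ENNReal.ofReal (π * δ^2 * (π ^ m / m.factorial)) := by
  obtain ⟨b, hb⟩ := exists_onb m v hv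
  have hmp : MeasurePreserving (realIso b) (volume : Measure (E (m+1))) volume := by
    rw [volume_eq_canonical (m+1) (Nat.succ_pos m)]
    exact (realIso b).measurePreserving
  -- the rotated set
  set B : Set (E (m+1)) := {y : E (m+1) | ‖y‖ ≤ 1 ∧ ‖y 0‖ ≤ δ} with hB
  have hBmeas : MeasurableSet B := by
    apply MeasurableSet.inter
    · exact measurableSet_le (measurable_norm) measurable_const
    · exact measurableSet_le (((measurable_pi_apply 0).comp (WithLp.measurable_ofLp 2 _)).norm) measurable_const
  have hset : {x : E (m+1) | ‖x‖ ≤ 1 ∧ ‖⟪x, v⟫_ℂ‖ ≤ δ} = (realIso b) ⁻¹' B := by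
    ext x
    simp only [Set.mem_setOf_eq, Set.mem_preimage, hB, realIso_apply]
    rw [b.repr.norm_map, b.repr_apply_apply, hb, norm_inner_symm]
  rw [hset, hmp.measure_preimage hBmeas.nullMeasurableSet]
  -- B is contained in a product-like set
  have hsub : B ⊆ {y : E (m+1) | ‖y 0‖ ≤ δ ∧ ∑ i : Fin m, ‖y i.succ‖ ^ (2:ℝ) ≤ 1} := by
    intro y hy
    obtain ⟨hy1, hy2⟩ := hy
    refine ⟨hy2, ?_⟩
    have h1' : y ∈ Metric.closedBall (0 : E (m+1)) 1 := by
      rwa [Metric.mem_closedBall, dist_zero_right]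
    rw [closedBall_eq_sum] at h1'
    have h1 : ∑ i, ‖y i‖ ^ (2:ℝ) ≤ 1 := h1'
    rw [Fin.sum_univ_succ] at h1
    have h0 : (0:ℝ) ≤ ‖y 0‖ ^ (2:ℝ) := by positivity
    linarith
  refine le_trans (measure_mono hsub) ?_
  -- transfer to the plain pi type and split off coordinate 0
  have heq : (volume : Measure (E (m+1)))
        {y : E (m+1) | ‖y 0‖ ≤ δ ∧ ∑ i : Fin m, ‖y i.succ‖ ^ (2:ℝ) ≤ 1}
      = (volume : Measure (Fin (m+1) → ℂ))
        {y : Fin (m+1) → ℂ | ‖y 0‖ ≤ δ ∧ ∑ i : Fin m, ‖y i.succ‖ ^ (2:ℝ) ≤ 1} := vol_apply (m+1) _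
  rw [heq]
  have hpre : {y : Fin (m+1) → ℂ | ‖y 0‖ ≤ δ ∧ ∑ i : Fin m, ‖y i.succ‖ ^ (2:ℝ) ≤ 1}
      = (MeasurableEquiv.piFinSuccAbove (fun _ => ℂ) 0) ⁻¹'
        ((Metric.closedBall 0 δ) ×ˢ {z : Fin m → ℂ | ∑ i, ‖z i‖ ^ (2:ℝ) ≤ 1}) := by
    ext y
    simp only [Set.mem_setOf_eq, Set.mem_preimage, MeasurableEquiv.piFinSuccAbove,
      Set.mem_prod, Metric.mem_closedBall, dist_zero_right]
    rfl
  rw [hpre]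
  have hD : MeasurableSet {z : Fin m → ℂ | ∑ i, ‖z i‖ ^ (2:ℝ) ≤ 1} := by
    have : {z : Fin m → ℂ | ∑ i, ‖z i‖ ^ (2:ℝ) ≤ 1} = {z : Fin m → ℂ | ∑ i, ‖z i‖ ^ (2:ℕ) ≤ 1} := by
      ext z; simp [Real.rpow_two]
    rw [this]
    refine measurableSet_le (Finset.measurable_sum _ (fun i _ => ?_)) measurable_const
    exact (measurable_pi_apply i).norm.pow_const 2
  have hS : MeasurableSet ((Metric.closedBall (0:ℂ) δ) ×ˢ {z : Fin m → ℂ | ∑ i, ‖z i‖ ^ (2:ℝ) ≤ 1}) :=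
    measurableSet_closedBall.prod hD
  rw [(volume_preserving_piFinSuccAbove (fun _ : Fin (m+1) => ℂ) 0).measure_preimage
    hS.nullMeasurableSet]
  have hDvol : (volume : Measure (Fin m → ℂ)) {z : Fin m → ℂ | ∑ i, ‖z i‖ ^ (2:ℝ) ≤ 1}
      = ENNReal.ofReal (π ^ m / m.factorial) := by
    have : (volume : Measure (Fin m → ℂ)) {z : Fin m → ℂ | ∑ i, ‖z i‖ ^ (2:ℝ) ≤ 1}
        = (volume : Measure (E m)) {z : E m | ∑ i, ‖z i‖ ^ (2:ℝ) ≤ 1} := (vol_apply m {z : E m | ∑ i, ‖z i‖ ^ (2:ℝ) ≤ 1}).symm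
    rw [this, ← closedBall_eq_sum, volume_closedBall_complex m hm]
  rw [Measure.volume_eq_prod, Measure.prod_prod, Complex.volume_closedBall, hDvol,
    ← ENNReal.ofReal_pow hδ,
    show (NNReal.pi : ℝ≥0∞) = ENNReal.ofReal π by rw [← NNReal.coe_real_pi, ENNReal.ofReal_coe_nnreal],
    ← ENNReal.ofReal_mul (by positivity), ← ENNReal.ofReal_mul (by positivity)]
  exact ENNReal.ofReal_le_ofReal (le_of_eq (by ring))

/-- The surface-area measure `𝒜_n` on the unit sphere `S^{2n-1} ⊂ ℂⁿ`. -/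
noncomputable def sphereArea (n : ℕ) :
    Measure (Metric.sphere (0 : EuclideanSpace ℂ (Fin n)) 1) :=
  (volume : Measure (EuclideanSpace ℂ (Fin n))).toSphere

/-- The normalized area measure `σ_n = 𝒜_n / 𝒜_n(S^{2n-1})` on the unit sphere of `ℂⁿ`. -/
noncomputable def sphereUniform (n : ℕ) :
    Measure (Metric.sphere (0 : EuclideanSpace ℂ (Fin n)) 1) :=
  (sphereArea n Set.univ)⁻¹ • sphereArea n

lemma inv_mul_self_le_one (a : ℝ≥0∞) : a⁻¹ * a ≤ 1 := by
  rcases eq_or_ne a 0 with h | h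
  · simp [h]
  rcases eq_or_ne a ∞ with h' | h'
  · simp [h']
  · rw [ENNReal.inv_mul_cancel h h']

lemma sphereUniform_le_one (n : ℕ) (t : Set (Metric.sphere (0 : EuclideanSpace ℂ (Fin n)) 1)) :
    sphereUniform n t ≤ 1 := by
  rw [sphereUniform, Measure.smul_apply, smul_eq_mul]
  exact le_trans (mul_le_mul_right (measure_mono (Set.subset_univ t)) _) (inv_mul_self_le_one _)

lemma sphereArea_univ (n : ℕ) (hn : 0 < n) :
    sphereArea n Set.univ = (2 * n : ℕ) * ENNReal.ofReal (π ^ n / n.factorial) := by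
  have := nontrivial_E n hn
  rw [sphereArea, Measure.toSphere_apply_univ, finrank_real_E, volume_ball_complex]

lemma sphereArea_cap_le (m : ℕ) (hm : 0 < m) (v : E (m+1)) (hv : ‖v‖ = 1) (δ : ℝ) (hδ : 0 ≤ δ)
    {s : Set (Metric.sphere (0 : EuclideanSpace ℂ (Fin (m+1))) 1)}
    (hs : MeasurableSet s)
    (hsub : s ⊆ {a | ‖⟪(a : E (m+1)), v⟫_ℂ‖ ≤ δ}) :
    sphereArea (m+1) s ≤ (2 * (m+1) : ℕ) * ENNReal.ofReal (π * δ^2 * (π ^ m / m.factorial)) := by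
  rw [sphereArea, Measure.toSphere_apply' _ hs, finrank_real_E]
  refine mul_le_mul_right (le_trans (measure_mono ?_) (cap_volume m hm v hv δ hδ)) _
  rintro x hx
  rw [Set.mem_smul] at hx
  obtain ⟨r, hr, y, hy, rfl⟩ := hx
  obtain ⟨a, ha, rfl⟩ := hy
  have ha1 : ‖(a : E (m+1))‖ = 1 := by
    simpa using mem_sphere_zero_iff_norm.mp a.2
  have haδ : ‖⟪(a : E (m+1)), v⟫_ℂ‖ ≤ δ := hsub ha
  have hr0 : 0 < r := hr.1
  have hr1 : r < 1 := hr.2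
  constructor
  · rw [norm_smul, Real.norm_eq_abs, abs_of_pos hr0, ha1, mul_one]
    exact hr1.le
  · have : ⟪r • (a : E (m+1)), v⟫_ℂ = (r : ℂ) * ⟪(a : E (m+1)), v⟫_ℂ := by
      rw [show r • (a : E (m+1)) = (r : ℂ) • (a : E (m+1)) by
        simp [Complex.coe_smul]]
      rw [inner_smul_left]
      simp
    rw [this, norm_mul, Complex.norm_real, Real.norm_eq_abs, abs_of_pos hr0]
    calc r * ‖⟪(a : E (m+1)), v⟫_ℂ‖ ≤ 1 * δ := by
          apply mul_le_mul hr1.le haδ (norm_nonneg _) zero_le_one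
      _ = δ := one_mul δ

lemma sphereUniform_cap_le (m : ℕ) (hm : 0 < m) (v : E (m+1)) (hv : ‖v‖ = 1) (δ : ℝ) (hδ : 0 ≤ δ)
    {s : Set (Metric.sphere (0 : EuclideanSpace ℂ (Fin (m+1))) 1)}
    (hs : MeasurableSet s)
    (hsub : s ⊆ {a | ‖⟪(a : E (m+1)), v⟫_ℂ‖ ≤ δ}) :
    sphereUniform (m+1) s ≤ ENNReal.ofReal ((m+1) * δ^2) := by
  have hkey : π * δ^2 * (π ^ m / m.factorial)
      = ((m+1) * δ^2) * (π ^ (m+1) / (m+1).factorial) := by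
    rw [Nat.factorial_succ]
    field_simp
    push_cast
    ring
  have h1 := sphereArea_cap_le m hm v hv δ hδ hs hsub
  rw [hkey, ENNReal.ofReal_mul (by positivity)] at h1
  have h2 : sphereArea (m+1) s
      ≤ ENNReal.ofReal ((m+1) * δ^2) * sphereArea (m+1) Set.univ := by
    rw [sphereArea_univ (m+1) (Nat.succ_pos m)]
    calc sphereArea (m+1) s
        ≤ (2*(m+1) : ℕ) * (ENNReal.ofReal ((m+1) * δ^2) * ENNReal.ofReal (π ^ (m+1) / (m+1).factorial)) := h1
      _ = ENNReal.ofReal ((m+1) * δ^2) * ((2*(m+1) : ℕ) * ENNReal.ofReal (π ^ (m+1) / (m+1).factorial)) := by ring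
  rw [sphereUniform, Measure.smul_apply, smul_eq_mul]
  calc (sphereArea (m+1) Set.univ)⁻¹ * sphereArea (m+1) s
      ≤ (sphereArea (m+1) Set.univ)⁻¹ * (ENNReal.ofReal ((m+1) * δ^2) * sphereArea (m+1) Set.univ) :=
        mul_le_mul_right h2 _
    _ = ENNReal.ofReal ((m+1) * δ^2) * ((sphereArea (m+1) Set.univ)⁻¹ * sphereArea (m+1) Set.univ) := by ring
    _ ≤ ENNReal.ofReal ((m+1) * δ^2) * 1 := mul_le_mul_right (inv_mul_self_le_one _) _
    _ = ENNReal.ofReal ((m+1) * δ^2) := mul_one _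

lemma tail_set_measurable (m : ℕ) (v : E (m+1)) (t : ℝ) :
    MeasurableSet {a : Metric.sphere (0 : EuclideanSpace ℂ (Fin (m+1))) 1 |
      t ≤ |Real.log ‖⟪(a : E (m+1)), v⟫_ℂ‖|} := by
  have hcont : Continuous fun a : Metric.sphere (0 : EuclideanSpace ℂ (Fin (m+1))) 1 =>
      ‖⟪(a : E (m+1)), v⟫_ℂ‖ := (Continuous.inner continuous_subtype_val continuous_const).norm
  exact measurableSet_le measurable_const ((Real.measurable_log.comp hcont.measurable).abs)

lemma tail_bound (m : ℕ) (hm : 0 < m) (v : E (m+1)) (hv : ‖v‖ = 1) (t : ℝ) (ht : 0 < t) :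
    sphereUniform (m+1) {a | t ≤ |Real.log ‖⟪(a : E (m+1)), v⟫_ℂ‖|}
      ≤ ENNReal.ofReal ((m+1) * Real.exp (-t)^2) := by
  refine sphereUniform_cap_le m hm v hv _ (Real.exp_pos _).le (tail_set_measurable m v t) ?_
  intro a ha
  simp only [Set.mem_setOf_eq] at ha ⊢
  set r := ‖⟪(a : E (m+1)), v⟫_ℂ‖ with hr
  rcases eq_or_lt_of_le (norm_nonneg (⟪(a : E (m+1)), v⟫_ℂ)) with h0 | h0
  · rw [hr, ← h0]; exact (Real.exp_pos _).le
  · have hr1 : r ≤ 1 := by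
      have := norm_inner_le_norm (𝕜 := ℂ) (a : E (m+1)) v
      have ha1 : ‖(a : E (m+1))‖ = 1 := by simpa using mem_sphere_zero_iff_norm.mp a.2
      rw [ha1, hv, one_mul] at this
      exact this
    have hlog : Real.log r ≤ 0 := Real.log_nonpos h0.le hr1
    rw [abs_of_nonpos hlog] at ha
    have : Real.log r ≤ -t := by linarith
    calc r = Real.exp (Real.log r) := (Real.exp_log h0).symm
      _ ≤ Real.exp (-t) := Real.exp_le_exp.mpr this

lemma lint_Ioc (α L : ℝ) (hα : 1 ≤ α) (hL : 0 < L) :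
    ∫⁻ t in Ioc (0:ℝ) L, ENNReal.ofReal (t^(α-1)) = ENNReal.ofReal (L^α / α) := by
  have hint : IntegrableOn (fun t : ℝ => t ^ (α-1)) (Ioc 0 L) := by
    have := intervalIntegral.intervalIntegrable_rpow' (a := 0) (b := L)
      (show (-1:ℝ) < α - 1 by linarith)
    exact (intervalIntegrable_iff_integrableOn_Ioc_of_le hL.le).mp this
  rw [← ofReal_integral_eq_lintegral_ofReal hint ?nn]
  case nn =>
    filter_upwards [ae_restrict_mem measurableSet_Ioc] with t ht
    exact Real.rpow_nonneg ht.1.le _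
  congr 1
  rw [← intervalIntegral.integral_of_le hL.le,
    integral_rpow (Or.inl (show (-1:ℝ) < α - 1 by linarith))]
  rw [sub_add_cancel, Real.zero_rpow (by linarith : α ≠ 0), sub_zero]

lemma lint_Ioi_gamma (α : ℝ) (hα : 1 ≤ α) :
    ∫⁻ t in Ioi (0:ℝ), ENNReal.ofReal (Real.exp (-t) * t^(α-1))
      = ENNReal.ofReal (Real.Gamma α) := by
  have h0 : (0:ℝ) < α := by linarith
  rw [Real.Gamma_eq_integral h0,
    ← ofReal_integral_eq_lintegral_ofReal (Real.GammaIntegral_convergent h0) ?nn]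
  case nn =>
    filter_upwards [ae_restrict_mem measurableSet_Ioi] with t ht
    have : (0:ℝ) < t := ht
    positivity

/-- Logarithmic moment bound for the normalized area measures of spheres: for every
`α ≥ 1` there is `C_α > 0` with
`∫_{S^{2n-1}} |log|⟨a,v⟩||^α dσ_n(a) ≤ C_α (log n)^α` for all `n ≥ 2` and unit `v`. -/
theorem sphere_log_moment (α : ℝ) (hα : 1 ≤ α) :
    ∃ C : ℝ, 0 < C ∧ ∀ n : ℕ, 2 ≤ n → ∀ v : EuclideanSpace ℂ (Fin n), ‖v‖ = 1 →
      ∫⁻ a : Metric.sphere (0 : EuclideanSpace ℂ (Fin n)) 1,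
          ENNReal.ofReal (|Real.log ‖⟪(a : EuclideanSpace ℂ (Fin n)), v⟫_ℂ‖| ^ α)
          ∂(sphereUniform n) ≤
        ENNReal.ofReal (C * Real.log n ^ α) := by
  have hα0 : (0:ℝ) < α := lt_of_lt_of_le one_pos hα
  have hΓ : 0 < Real.Gamma α := Real.Gamma_pos_of_pos hα0
  have hlog2 : (0:ℝ) < Real.log 2 := Real.log_pos one_lt_two
  refine ⟨1 + α * Real.Gamma α / (Real.log 2) ^ α, by positivity, ?_⟩
  intro n hn v hv
  obtain ⟨m, rfl⟩ : ∃ m, n = m + 1 := ⟨n - 1, by omega⟩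
  have hm : 0 < m := by omega
  set L := Real.log ((m+1 : ℕ) : ℝ) with hLdef
  have hL2 : Real.log 2 ≤ L := by
    apply Real.log_le_log (by norm_num)
    exact_mod_cast hn
  have hL0 : (0:ℝ) < L := lt_of_lt_of_le hlog2 hL2
  have hcont : Continuous fun a : Metric.sphere (0 : EuclideanSpace ℂ (Fin (m+1))) 1 =>
      ‖⟪(a : E (m+1)), v⟫_ℂ‖ := (Continuous.inner continuous_subtype_val continuous_const).norm
  have f_mble : AEMeasurable
      (fun a : Metric.sphere (0 : EuclideanSpace ℂ (Fin (m+1))) 1 =>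
        |Real.log ‖⟪(a : E (m+1)), v⟫_ℂ‖|) (sphereUniform (m+1)) :=
    ((Real.measurable_log.comp hcont.measurable).abs).aemeasurable
  rw [MeasureTheory.lintegral_rpow_eq_lintegral_meas_le_mul (sphereUniform (m+1))
    (Filter.Eventually.of_forall (fun a => abs_nonneg _)) f_mble hα0]
  have hsplit : Ioi (0:ℝ) = Ioc 0 L ∪ Ioi L := (Set.Ioc_union_Ioi_eq_Ioi hL0.le).symm
  rw [hsplit, lintegral_union measurableSet_Ioi (Set.Ioc_disjoint_Ioi le_rfl)]
  set f := fun a : Metric.sphere (0 : EuclideanSpace ℂ (Fin (m+1))) 1 =>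
    |Real.log ‖⟪(a : E (m+1)), v⟫_ℂ‖| with hf
  have h1 : ∫⁻ t in Ioc (0:ℝ) L, sphereUniform (m+1) {a | t ≤ f a} * ENNReal.ofReal (t^(α-1))
      ≤ ENNReal.ofReal (L^α / α) := by
    refine le_trans (lintegral_mono (fun t => ?_)) (le_of_eq (lint_Ioc α L hα hL0))
    calc sphereUniform (m+1) {a | t ≤ f a} * ENNReal.ofReal (t^(α-1))
        ≤ 1 * ENNReal.ofReal (t^(α-1)) := mul_le_mul_left (sphereUniform_le_one _ _) _
      _ = ENNReal.ofReal (t^(α-1)) := one_mul _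
  have h2 : ∫⁻ t in Ioi L, sphereUniform (m+1) {a | t ≤ f a} * ENNReal.ofReal (t^(α-1))
      ≤ ENNReal.ofReal (Real.Gamma α) := by
    refine le_trans (le_trans ?_ (lintegral_mono_set (Set.Ioi_subset_Ioi hL0.le)))
      (le_of_eq (lint_Ioi_gamma α hα))
    refine lintegral_mono_ae ?_
    filter_upwards [ae_restrict_mem measurableSet_Ioi] with t ht
    have htL : L < t := ht
    have ht0 : (0:ℝ) < t := lt_trans hL0 htL
    have hb := tail_bound m hm v hv t ht0
    have hexp : ((m:ℝ)+1) * Real.exp (-t)^2 ≤ Real.exp (-t) := by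
      have hm1 : ((m:ℝ)+1) ≤ Real.exp t := by
        have he : ((m:ℝ)+1) = Real.exp L := by
          rw [hLdef, Real.exp_log (by positivity)]
          push_cast; ring
        rw [he]
        exact Real.exp_le_exp.mpr htL.le
      calc ((m:ℝ)+1) * Real.exp (-t)^2 ≤ Real.exp t * Real.exp (-t)^2 :=
            mul_le_mul_of_nonneg_right hm1 (sq_nonneg _)
        _ = Real.exp (t + -t + -t) := by
            rw [pow_two, ← mul_assoc, ← Real.exp_add, ← Real.exp_add]
        _ = Real.exp (-t) := by ring_nf
    calc sphereUniform (m+1) {a | t ≤ f a} * ENNReal.ofReal (t^(α-1))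
        ≤ ENNReal.ofReal (((m:ℝ)+1) * Real.exp (-t)^2) * ENNReal.ofReal (t^(α-1)) := by
          refine mul_le_mul_left (le_trans (le_of_eq ?_) (le_trans hb (le_of_eq ?_))) _
          · rfl
          · norm_num
      _ ≤ ENNReal.ofReal (Real.exp (-t)) * ENNReal.ofReal (t^(α-1)) :=
          mul_le_mul_left (ENNReal.ofReal_le_ofReal hexp) _
      _ = ENNReal.ofReal (Real.exp (-t) * t^(α-1)) :=
          (ENNReal.ofReal_mul (Real.exp_pos _).le).symm
  calc ENNReal.ofReal α * ((∫⁻ t in Ioc (0:ℝ) L, sphereUniform (m+1) {a | t ≤ f a} * ENNReal.ofReal (t^(α-1)))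
        + ∫⁻ t in Ioi L, sphereUniform (m+1) {a | t ≤ f a} * ENNReal.ofReal (t^(α-1)))
      ≤ ENNReal.ofReal α * (ENNReal.ofReal (L^α / α) + ENNReal.ofReal (Real.Gamma α)) :=
        mul_le_mul_right (add_le_add h1 h2) _
    _ = ENNReal.ofReal (L^α + α * Real.Gamma α) := by
        rw [← ENNReal.ofReal_add (by positivity) hΓ.le, ← ENNReal.ofReal_mul hα0.le]
        congr 1
        field_simp
    _ ≤ ENNReal.ofReal ((1 + α * Real.Gamma α / (Real.log 2) ^ α) * L ^ α) := by
        apply ENNReal.ofReal_le_ofReal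
        have hpow : (Real.log 2) ^ α ≤ L ^ α := Real.rpow_le_rpow hlog2.le hL2 hα0.le
        have h3 : α * Real.Gamma α ≤ (α * Real.Gamma α / (Real.log 2) ^ α) * L ^ α := by
          rw [div_mul_eq_mul_div, le_div_iff₀ (by positivity)]
          calc α * Real.Gamma α * (Real.log 2) ^ α ≤ α * Real.Gamma α * L ^ α := by
                apply mul_le_mul_of_nonneg_left hpow (by positivity)
            _ = α * Real.Gamma α * L ^ α := rfl
        nlinarith [h3]
end

section
/- Let (T, 𝒜) be a measurable space and ν a finite signed measure on T with total variation measure |ν|. Let d ≥ 1 be an integer, let σ be a probability measure on ℂ^d, and let α ≥ 1 and C > 0 be real numbers such that ∫_{ℂ^d} |log |⟨a, v⟩||^α dσ(a) ≤ C for every v ∈ ℂ^d with ‖v‖ = 1. Let ρ : T → ℂ^d be measurable with ‖ρ(x)‖ = 1 for every x ∈ T, let g : T → ℝ be |ν|-integrable, and define W : ℂ^d → ℝ by W(a) = ∫_T ( g(x) + log |⟨a, ρ(x)⟩| ) dν(x). Then W is σ-integrable and |∫_{ℂ^d} W(a) dσ(a)| ≤ ∫_T |g| d|ν| + C^{1/α}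 · |ν|(T). -/
open MeasureTheory
open scoped InnerProductSpace ENNReal

private lemma lintegral_nnnorm_le_of_moment {E : Type*} [MeasurableSpace E]
    (σ : MeasureTheory.Measure E) [MeasureTheory.IsProbabilityMeasure σ]
    {α C : ℝ} (hα : 1 ≤ α) (hC : 0 < C)
    {f : E → ℝ} (hf : MeasureTheory.AEStronglyMeasurable f σ)
    (h : ∫⁻ a, ENNReal.ofReal (|f a| ^ α) ∂σ ≤ ENNReal.ofReal C) :
    ∫⁻ a, (‖f a‖₊ : ℝ≥0∞) ∂σ ≤ ENNReal.ofReal (C ^ (1 / α)) := by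
  have hα0 : (0:ℝ) < α := lt_of_lt_of_le one_pos hα
  have hq0 : ENNReal.ofReal α ≠ 0 := by
    simp only [ne_eq, ENNReal.ofReal_eq_zero, not_le]; linarith
  have hq1 : (1:ℝ≥0∞) ≤ ENNReal.ofReal α := by
    rw [← ENNReal.ofReal_one]; exact ENNReal.ofReal_le_ofReal hα
  have hle := MeasureTheory.eLpNorm_le_eLpNorm_of_exponent_le (μ := σ) hq1 hf
  rw [MeasureTheory.eLpNorm_one_eq_lintegral_enorm,
    MeasureTheory.eLpNorm_eq_lintegral_rpow_enorm hq0 ENNReal.ofReal_ne_top,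
    ENNReal.toReal_ofReal hα0.le] at hle
  refine hle.trans ?_
  have heq : ∀ a, ((‖f a‖₊ : ℝ≥0∞)) ^ α = ENNReal.ofReal (|f a| ^ α) := fun a => by
    rw [show ((‖f a‖₊ : ℝ≥0∞)) = ‖f a‖ₑ from rfl, Real.enorm_eq_ofReal_abs, ← ENNReal.ofReal_rpow_of_nonneg (abs_nonneg _) hα0.le]
  calc (∫⁻ a, (‖f a‖₊ : ℝ≥0∞) ^ α ∂σ) ^ (1/α)
      = (∫⁻ a, ENNReal.ofReal (|f a| ^ α) ∂σ) ^ (1/α) := by simp_rw [heq]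
    _ ≤ (ENNReal.ofReal C) ^ (1/α) := ENNReal.rpow_le_rpow h (by positivity)
    _ = ENNReal.ofReal (C ^ (1/α)) := ENNReal.ofReal_rpow_of_pos hC

/-- The expected smooth linear statistic `W(a) = ∫_T (g(x) + log|⟨a,ρ(x)⟩|) dν(x)` is
`σ`-integrable and `|∫ W dσ| ≤ ∫|g| d|ν| + C^{1/α} |ν|(T)`. -/
theorem expected_statistic_bound
    {T : Type*} [MeasurableSpace T] (ν : SignedMeasure T)
    (d : ℕ) (hd : 1 ≤ d)
    (σ : Measure (EuclideanSpace ℂ (Fin d))) [IsProbabilityMeasure σ]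
    (α C : ℝ) (hα : 1 ≤ α) (hC : 0 < C)
    (hmom : ∀ v : EuclideanSpace ℂ (Fin d), ‖v‖ = 1 →
      ∫⁻ a, ENNReal.ofReal (|Real.log ‖⟪a, v⟫_ℂ‖| ^ α) ∂σ ≤ ENNReal.ofReal C)
    (ρ : T → EuclideanSpace ℂ (Fin d)) (hρ : Measurable ρ)
    (hρ1 : ∀ x, ‖ρ x‖ = 1)
    (g : T → ℝ) (hg : Integrable g ν.totalVariation)
    (W : EuclideanSpace ℂ (Fin d) → ℝ)
    (hW : W = fun a => sintegral ν fun x => g x + Real.log ‖⟪a, ρ x⟫_ℂ‖) :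
    Integrable W σ ∧
      |∫ a, W a ∂σ| ≤ (∫ x, |g x| ∂ν.totalVariation) +
        C ^ (1 / α) * (ν.totalVariation Set.univ).toReal := by

  classical
  set μp := ν.toJordanDecomposition.posPart with hμpdef
  set μn := ν.toJordanDecomposition.negPart with hμndef
  have htv : ν.totalVariation = μp + μn := rfl
  set g' : T → ℝ := hg.1.mk g with hg'def
  have hg'm : Measurable g' := hg.1.stronglyMeasurable_mk.measurable
  have hgg' : g =ᵐ[ν.totalVariation] g' := hg.1.ae_eq_mk
  have hg' : Integrable g' ν.totalVariation := hg.congr hgg'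
  have hlep : μp ≤ ν.totalVariation := by rw [htv]; exact Measure.le_add_right le_rfl
  have hlen : μn ≤ ν.totalVariation := by rw [htv]; exact Measure.le_add_left le_rfl
  haveI : IsFiniteMeasure ν.totalVariation := by rw [htv]; infer_instance
  have hggp : g =ᵐ[μp] g' := hgg'.filter_mono (ae_mono hlep)
  have hggn : g =ᵐ[μn] g' := hgg'.filter_mono (ae_mono hlen)
  set L : EuclideanSpace ℂ (Fin d) × T → ℝ := fun z => Real.log ‖⟪z.1, ρ z.2⟫_ℂ‖ with hLdef
  have hLm : Measurable L := by
    have h1 : Measurable fun z : EuclideanSpace ℂ (Fin d) × T => ⟪z.1, ρ z.2⟫_ℂ :=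
      continuous_inner.measurable.comp (measurable_fst.prodMk (hρ.comp measurable_snd))
    exact Real.measurable_log.comp h1.norm
  set F : EuclideanSpace ℂ (Fin d) × T → ℝ := fun z => g' z.2 + L z with hFdef
  have hFm : Measurable F := (hg'm.comp measurable_snd).add hLm
  set c : ℝ≥0∞ := ENNReal.ofReal (C ^ (1/α)) with hcdef
  -- per-x bound
  have hxbound : ∀ x : T, ∫⁻ a, (‖L (a, x)‖₊ : ℝ≥0∞) ∂σ ≤ c := by
    intro x
    exact lintegral_nnnorm_le_of_moment σ hα hC
      ((hLm.comp (measurable_id.prodMk measurable_const)).aestronglyMeasurable)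
      (hmom (ρ x) (hρ1 x))
  -- key bound for a sub-measure
  have key : ∀ μ : Measure T, IsFiniteMeasure μ →
      ∫⁻ z, (‖F z‖₊ : ℝ≥0∞) ∂(σ.prod μ) ≤ (∫⁻ x, (‖g' x‖₊ : ℝ≥0∞) ∂μ) + c * μ Set.univ := by
    intro μ hfin
    haveI := hfin
    rw [lintegral_prod_symm _ hFm.nnnorm.coe_nnreal_ennreal.aemeasurable]
    calc ∫⁻ x, ∫⁻ a, (‖F (a, x)‖₊ : ℝ≥0∞) ∂σ ∂μ
        ≤ ∫⁻ x, ((‖g' x‖₊ : ℝ≥0∞) + c) ∂μ := by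
          refine lintegral_mono fun x => ?_
          calc ∫⁻ a, (‖F (a, x)‖₊ : ℝ≥0∞) ∂σ
              ≤ ∫⁻ a, ((‖g' x‖₊ : ℝ≥0∞) + (‖L (a, x)‖₊ : ℝ≥0∞)) ∂σ := by
                refine lintegral_mono fun a => ?_
                refine le_trans (ENNReal.coe_le_coe.2 (nnnorm_add_le (g' x) (L (a, x)))) ?_
                rw [ENNReal.coe_add]
            _ = (∫⁻ _, (‖g' x‖₊ : ℝ≥0∞) ∂σ) + ∫⁻ a, (‖L (a, x)‖₊ : ℝ≥0∞) ∂σ :=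
                lintegral_add_left measurable_const _
            _ ≤ (‖g' x‖₊ : ℝ≥0∞) + c := by
                rw [lintegral_const, measure_univ, mul_one]
                exact add_le_add le_rfl (hxbound x)
      _ = (∫⁻ x, (‖g' x‖₊ : ℝ≥0∞) ∂μ) + c * μ Set.univ := by
          rw [lintegral_add_right _ measurable_const, lintegral_const]
  have hgfinp : ∫⁻ x, (‖g' x‖₊ : ℝ≥0∞) ∂μp < ⊤ :=
    lt_of_le_of_lt (lintegral_mono' hlep le_rfl) hg'.2
  have hgfinn : ∫⁻ x, (‖g' x‖₊ : ℝ≥0∞) ∂μn < ⊤ :=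
    lt_of_le_of_lt (lintegral_mono' hlen le_rfl) hg'.2
  have hcfin : c ≠ ⊤ := ENNReal.ofReal_ne_top
  have hFip : Integrable F (σ.prod μp) := by
    refine ⟨hFm.aestronglyMeasurable, lt_of_le_of_lt (key μp inferInstance) ?_⟩
    exact ENNReal.add_lt_top.2 ⟨hgfinp, ENNReal.mul_lt_top hcfin.lt_top (measure_lt_top _ _)⟩
  have hFin : Integrable F (σ.prod μn) := by
    refine ⟨hFm.aestronglyMeasurable, lt_of_le_of_lt (key μn inferInstance) ?_⟩
    exact ENNReal.add_lt_top.2 ⟨hgfinn, ENNReal.mul_lt_top hcfin.lt_top (measure_lt_top _ _)⟩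
  have hWeq : W = fun a => (∫ x, F (a, x) ∂μp) - ∫ x, F (a, x) ∂μn := by
    rw [hW]
    funext a
    have hp : ∫ x, (g x + Real.log ‖⟪a, ρ x⟫_ℂ‖) ∂μp = ∫ x, F (a, x) ∂μp := by
      refine integral_congr_ae ?_
      filter_upwards [hggp] with x hx
      simp [hFdef, hLdef, hx]
    have hn : ∫ x, (g x + Real.log ‖⟪a, ρ x⟫_ℂ‖) ∂μn = ∫ x, F (a, x) ∂μn := by
      refine integral_congr_ae ?_
      filter_upwards [hggn] with x hx
      simp [hFdef, hLdef, hx]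
    simp only [sintegral]
    rw [← hμpdef, ← hμndef, hp, hn]
  have hIp : Integrable (fun a => ∫ x, F (a, x) ∂μp) σ := hFip.integral_prod_left
  have hIn : Integrable (fun a => ∫ x, F (a, x) ∂μn) σ := hFin.integral_prod_left
  have hWint : Integrable W σ := by rw [hWeq]; exact hIp.sub hIn
  refine ⟨hWint, ?_⟩
  -- the bound
  have hWb : ∀ a, (‖W a‖₊ : ℝ≥0∞)
      ≤ (∫⁻ x, (‖F (a, x)‖₊ : ℝ≥0∞) ∂μp) + ∫⁻ x, (‖F (a, x)‖₊ : ℝ≥0∞) ∂μn := by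
    intro a
    rw [hWeq]
    calc ((‖(∫ x, F (a, x) ∂μp) - ∫ x, F (a, x) ∂μn‖₊ : ℝ≥0∞))
        ≤ (‖∫ x, F (a, x) ∂μp‖₊ : ℝ≥0∞) + (‖∫ x, F (a, x) ∂μn‖₊ : ℝ≥0∞) := by
          exact_mod_cast nnnorm_sub_le _ _
      _ ≤ _ := add_le_add (enorm_integral_le_lintegral_enorm _)
            (enorm_integral_le_lintegral_enorm _)
  set R : ℝ≥0∞ := (∫⁻ x, (‖g' x‖₊ : ℝ≥0∞) ∂ν.totalVariation) + c * ν.totalVariation Set.univ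
    with hRdef
  have hWlint : ∫⁻ a, (‖W a‖₊ : ℝ≥0∞) ∂σ ≤ R := by
    calc ∫⁻ a, (‖W a‖₊ : ℝ≥0∞) ∂σ
        ≤ ∫⁻ a, ((∫⁻ x, (‖F (a, x)‖₊ : ℝ≥0∞) ∂μp)
            + ∫⁻ x, (‖F (a, x)‖₊ : ℝ≥0∞) ∂μn) ∂σ := lintegral_mono hWb
      _ = (∫⁻ a, ∫⁻ x, (‖F (a, x)‖₊ : ℝ≥0∞) ∂μp ∂σ)
            + ∫⁻ a, ∫⁻ x, (‖F (a, x)‖₊ : ℝ≥0∞) ∂μn ∂σ :=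
          lintegral_add_left (hFm.nnnorm.coe_nnreal_ennreal.lintegral_prod_right') _
      _ = (∫⁻ z, (‖F z‖₊ : ℝ≥0∞) ∂(σ.prod μp)) + ∫⁻ z, (‖F z‖₊ : ℝ≥0∞) ∂(σ.prod μn) := by
          rw [lintegral_prod _ hFm.nnnorm.coe_nnreal_ennreal.aemeasurable, lintegral_prod _ hFm.nnnorm.coe_nnreal_ennreal.aemeasurable]
      _ ≤ ((∫⁻ x, (‖g' x‖₊ : ℝ≥0∞) ∂μp) + c * μp Set.univ)
            + ((∫⁻ x, (‖g' x‖₊ : ℝ≥0∞) ∂μn) + c * μn Set.univ) :=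
          add_le_add (key μp inferInstance) (key μn inferInstance)
      _ = R := by
          rw [hRdef, htv, lintegral_add_measure, Measure.add_apply, mul_add]
          ring
  have hRfin : R ≠ ⊤ := by
    rw [hRdef]
    exact ENNReal.add_ne_top.2 ⟨hg'.2.ne,
      (ENNReal.mul_lt_top hcfin.lt_top (measure_lt_top _ _)).ne⟩
  have h1 : |∫ a, W a ∂σ| ≤ (∫⁻ a, ENNReal.ofReal ‖W a‖ ∂σ).toReal := by
    rw [← Real.norm_eq_abs]
    exact norm_integral_le_lintegral_norm W
  simp_rw [ofReal_norm] at h1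
  refine h1.trans ?_
  refine (ENNReal.toReal_mono hRfin hWlint).trans_eq ?_
  rw [hRdef, ENNReal.toReal_add (show (∫⁻ x, (‖g' x‖₊ : ℝ≥0∞) ∂ν.totalVariation) ≠ ⊤ from hg'.2.ne)
    (ENNReal.mul_lt_top hcfin.lt_top (measure_lt_top _ _)).ne, ENNReal.toReal_mul,
    hcdef, ENNReal.toReal_ofReal (Real.rpow_nonneg hC.le _)]
  congr 1
  have : ∫ x, |g x| ∂ν.totalVariation = ∫ x, ‖g x‖ ∂ν.totalVariation := by
    simp [Real.norm_eq_abs]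
  rw [this, integral_norm_eq_lintegral_enorm hg.1]
  congr 1
  refine lintegral_congr_ae ?_
  filter_upwards [hgg'] with x hx
  rw [hx]; rfl
end

section
/- Let (T, 𝒜) be a measurable space, let α ≥ 1 and M > 0 be real numbers, and for each p ∈ ℕ let: d_p ≥ 1 be an integer, ν_p a finite signed measure on T with total variation |ν_p|(T) ≤ M, σ_p a probability measure on ℂ^{d_p}, C_p > 0 a constant with ∫_{ℂ^{d_p}} |log |⟨a, v⟩||^α dσ_p(a) ≤ C_p for every unit vector v ∈ ℂ^{d_p}, ρ_p : T → ℂ^{d_p} a measurable map with ‖ρ_p(x)‖ = 1 for all x, and A_p > 0. If lim_{p→∞} C_p^{1/α}/A_p = 0, then (1/A_p) ∫_T ∫_{ℂ^{d_p}} log |⟨a, ρ_p(x)⟩| dσ_p(a) dν_p(x) → 0 as p → ∞. -/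
open MeasureTheory Filter
open scoped InnerProductSpace ENNReal

/-- If `C_p^{1/α}/A_p → 0` then the normalized logarithmic terms
`(1/A_p) ∫_T ∫_{ℂ^{d_p}} log|⟨a, ρ_p(x)⟩| dσ_p(a) dν_p(x)` tend to `0`. -/
theorem normalized_log_term_tendsto_zero
    {T : Type*} [MeasurableSpace T] (α M : ℝ) (hα : 1 ≤ α) (hM : 0 < M)
    (d : ℕ → ℕ) (hd : ∀ p, 1 ≤ d p)
    (ν : ℕ → SignedMeasure T)
    (hν : ∀ p, (ν p).totalVariation Set.univ ≤ ENNReal.ofReal M)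
    (σ : ∀ p : ℕ, Measure (EuclideanSpace ℂ (Fin (d p))))
    (hσ : ∀ p, IsProbabilityMeasure (σ p))
    (C : ℕ → ℝ) (hC : ∀ p, 0 < C p)
    (hmom : ∀ p, ∀ v : EuclideanSpace ℂ (Fin (d p)), ‖v‖ = 1 →
      ∫⁻ a, ENNReal.ofReal (|Real.log ‖⟪a, v⟫_ℂ‖| ^ α) ∂(σ p) ≤ ENNReal.ofReal (C p))
    (ρ : ∀ p : ℕ, T → EuclideanSpace ℂ (Fin (d p))) (hρ : ∀ p, Measurable (ρ p))
    (hρ1 : ∀ p x, ‖ρ p x‖ = 1)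
    (A : ℕ → ℝ) (hA : ∀ p, 0 < A p)
    (hlim : Tendsto (fun p => C p ^ (1 / α) / A p) atTop (nhds 0)) :
    Tendsto (fun p =>
        (1 / A p) * sintegral (ν p) fun x => ∫ a, Real.log ‖⟪a, ρ p x⟫_ℂ‖ ∂(σ p))
      atTop (nhds 0) := by
  have hα0 : (0:ℝ) < α := lt_of_lt_of_le one_pos hα
  -- inner bound: for unit v, ‖∫ log‖⟪a,v⟫‖ dσ‖ ≤ C p ^ (1/α)
  have hinner : ∀ p (v : EuclideanSpace ℂ (Fin (d p))), ‖v‖ = 1 →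
      ‖∫ a, Real.log ‖⟪a, v⟫_ℂ‖ ∂(σ p)‖ ≤ C p ^ (1 / α) := by
    intro p v hv
    haveI := hσ p
    set f : EuclideanSpace ℂ (Fin (d p)) → ℝ := fun a => Real.log ‖⟪a, v⟫_ℂ‖ with hf
    have hfm : Measurable f :=
      Real.measurable_log.comp (continuous_norm.comp (continuous_id.inner continuous_const)).measurable
    have key : ∫⁻ a, ENNReal.ofReal ‖f a‖ ∂(σ p) ≤ ENNReal.ofReal (C p ^ (1 / α)) := by
      have h1 := eLpNorm'_le_eLpNorm'_of_exponent_le (f := f) one_pos hα (σ p)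
        hfm.aestronglyMeasurable
      simp only [eLpNorm'] at h1
      norm_num at h1
      rw [← one_div α] at h1
      have hnorm : ∀ a, (‖f a‖₊ : ℝ≥0∞) = ENNReal.ofReal ‖f a‖ := fun a =>
        (ofReal_norm_eq_enorm _).symm
      calc ∫⁻ a, ENNReal.ofReal ‖f a‖ ∂(σ p)
          = ∫⁻ a, (‖f a‖₊ : ℝ≥0∞) ∂(σ p) := by simp_rw [hnorm]
        _ ≤ (∫⁻ a, (‖f a‖₊ : ℝ≥0∞) ^ α ∂(σ p)) ^ (1/α) := h1
        _ = (∫⁻ a, ENNReal.ofReal (|Real.log ‖⟪a, v⟫_ℂ‖| ^ α) ∂(σ p)) ^ (1/α) := by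
            congr 1
            refine lintegral_congr fun a => ?_
            rw [hnorm, ENNReal.ofReal_rpow_of_nonneg (norm_nonneg _) hα0.le]
            simp [hf, Real.norm_eq_abs]
        _ ≤ (ENNReal.ofReal (C p)) ^ (1/α) := by
            exact ENNReal.rpow_le_rpow (hmom p v hv) (one_div_nonneg.mpr hα0.le)
        _ = ENNReal.ofReal (C p ^ (1/α)) :=
            ENNReal.ofReal_rpow_of_nonneg (hC p).le (one_div_nonneg.mpr hα0.le)
    calc ‖∫ a, f a ∂(σ p)‖ ≤ (∫⁻ a, ENNReal.ofReal ‖f a‖ ∂(σ p)).toReal :=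
          norm_integral_le_lintegral_norm f
      _ ≤ (ENNReal.ofReal (C p ^ (1/α))).toReal :=
          ENNReal.toReal_mono ENNReal.ofReal_ne_top key
      _ = C p ^ (1/α) := ENNReal.toReal_ofReal (Real.rpow_nonneg (hC p).le _)
  -- bound on the signed integral
  have hsint : ∀ p, |sintegral (ν p) fun x => ∫ a, Real.log ‖⟪a, ρ p x⟫_ℂ‖ ∂(σ p)|
      ≤ M * C p ^ (1/α) := by
    intro p
    set B := C p ^ (1/α) with hB
    have hB0 : 0 ≤ B := Real.rpow_nonneg (hC p).le _
    set g : T → ℝ := fun x => ∫ a, Real.log ‖⟪a, ρ p x⟫_ℂ‖ ∂(σ p) with hg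
    have hbound : ∀ x, ‖g x‖ ≤ B := fun x => hinner p (ρ p x) (hρ1 p x)
    set μp := (ν p).toJordanDecomposition.posPart
    set μn := (ν p).toJordanDecomposition.negPart
    have h1 : ‖∫ x, g x ∂μp‖ ≤ B * (μp Set.univ).toReal :=
      norm_integral_le_of_norm_le_const (Filter.Eventually.of_forall hbound)
    have h2 : ‖∫ x, g x ∂μn‖ ≤ B * (μn Set.univ).toReal :=
      norm_integral_le_of_norm_le_const (Filter.Eventually.of_forall hbound)
    have htv : (μp Set.univ).toReal + (μn Set.univ).toReal ≤ M := by
      have hadd : μp Set.univ + μn Set.univ ≤ ENNReal.ofReal M := by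
        have := hν p
        rwa [SignedMeasure.totalVariation, Measure.add_apply] at this
      have hfin : μp Set.univ + μn Set.univ ≠ ⊤ :=
        (lt_of_le_of_lt hadd ENNReal.ofReal_lt_top).ne
      have := ENNReal.toReal_mono ENNReal.ofReal_ne_top hadd
      rwa [ENNReal.toReal_add (by finiteness) (by finiteness),
        ENNReal.toReal_ofReal hM.le] at this
    calc |sintegral (ν p) g| ≤ ‖∫ x, g x ∂μp‖ + ‖∫ x, g x ∂μn‖ := by
          rw [sintegral]; exact abs_sub _ _
      _ ≤ B * (μp Set.univ).toReal + B * (μn Set.univ).toReal := add_le_add h1 h2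
      _ = B * ((μp Set.univ).toReal + (μn Set.univ).toReal) := by ring
      _ ≤ B * M := mul_le_mul_of_nonneg_left htv hB0
      _ = M * B := mul_comm _ _
  -- squeeze
  refine squeeze_zero_norm (a := fun p => M * (C p ^ (1/α) / A p)) (fun p => ?_)
    (by simpa using hlim.const_mul M)
  · rw [Real.norm_eq_abs, abs_mul, abs_of_pos (one_div_pos.mpr (hA p))]
    calc (1 / A p) * |sintegral (ν p) fun x => ∫ a, Real.log ‖⟪a, ρ p x⟫_ℂ‖ ∂(σ p)|
        ≤ (1 / A p) * (M * C p ^ (1/α)) :=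
          mul_le_mul_of_nonneg_left (hsint p) (one_div_nonneg.mpr (hA p).le)
      _ = M * (C p ^ (1/α) / A p) := by rw [div_eq_mul_inv, one_div]; ring
end
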